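/- arXiv:1509.04963 — 3 statements merged into one kernel-verified Lean document; each statement's English description precedes it below -/
import Mathlib

section
/- Let w ∈ ℂⁿ have all entries non-zero, and for Λ ⊆ {1,…,n} let V_Λ = {v ∈ w^⊥ : v_j = 0 for all j ∉ Λ}. If Λ₁ and Λ₂ are non-empty subsets with Λ₁ ∩ Λ₂ ≠ ∅, then V_{Λ₁} + V_{Λ₂} = V_{Λ₁ ∪ Λ₂}. -/
open Finset

/-- For `w ∈ ℂⁿ` and `Λ ⊆ {1,…,n}`, the space `V_Λ = {v ∈ w^⊥ : v_j = 0 ∀ j ∉ Λ}`,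
where `w^⊥ = {v : Σⱼ vⱼ wⱼ = 0}`. -/
noncomputable def Vsub {n : ℕ} (w : Fin n → ℂ) (Λ : Finset (Fin n)) :
    Submodule ℂ (Fin n → ℂ) :=
  (LinearMap.ker (∑ j, w j • (LinearMap.proj j : (Fin n → ℂ) →ₗ[ℂ] ℂ))) ⊓
    ⨅ j ∈ {j | j ∉ Λ}, LinearMap.ker (LinearMap.proj j : (Fin n → ℂ) →ₗ[ℂ] ℂ)

lemma mem_Vsub {n : ℕ} (w : Fin n → ℂ) (Λ : Finset (Fin n)) (v : Fin n → ℂ) :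
    v ∈ Vsub w Λ ↔ (∑ j, w j * v j = 0) ∧ ∀ j ∉ Λ, v j = 0 := by
  simp [Vsub, Submodule.mem_inf, LinearMap.mem_ker, LinearMap.sum_apply,
    LinearMap.smul_apply, Submodule.mem_iInf, smul_eq_mul]

/-- If `Λ₁, Λ₂` are non-empty with `Λ₁ ∩ Λ₂ ≠ ∅` then `V_{Λ₁} + V_{Λ₂} = V_{Λ₁ ∪ Λ₂}`. -/
theorem stmt3 {n : ℕ} (w : Fin n → ℂ) (hw : ∀ j, w j ≠ 0)
    (Λ₁ Λ₂ : Finset (Fin n)) [DecidableEq (Fin n)]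
    (h₁ : Λ₁.Nonempty) (h₂ : Λ₂.Nonempty) (h : (Λ₁ ∩ Λ₂).Nonempty) :
    Vsub w Λ₁ ⊔ Vsub w Λ₂ = Vsub w (Λ₁ ∪ Λ₂) := by
  obtain ⟨k, hk⟩ := h
  have hk1 : k ∈ Λ₁ := (Finset.mem_inter.mp hk).1
  have hk2 : k ∈ Λ₂ := (Finset.mem_inter.mp hk).2
  apply le_antisymm
  · apply sup_le
    · intro v hv
      rw [mem_Vsub] at hv ⊢
      exact ⟨hv.1, fun j hj => hv.2 j (fun hj' => hj (Finset.mem_union_left _ hj'))⟩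
    · intro v hv
      rw [mem_Vsub] at hv ⊢
      exact ⟨hv.1, fun j hj => hv.2 j (fun hj' => hj (Finset.mem_union_right _ hj'))⟩
  · intro v hv
    rw [mem_Vsub] at hv
    set s : ℂ := ∑ j ∈ Λ₂ \ Λ₁, w j * v j with hs
    set v₂ : Fin n → ℂ := fun j => if j ∈ Λ₂ \ Λ₁ then v j else if j = k then -(s / w k) else 0
      with hv₂def
    have hknot : k ∉ Λ₂ \ Λ₁ := fun hc => (Finset.mem_sdiff.mp hc).2 hk1
    have hsum2 : ∑ j, w j * v₂ j = 0 := by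
      have hzero : ∀ j ∈ Finset.univ, j ∉ insert k (Λ₂ \ Λ₁) → w j * v₂ j = 0 := by
        intro j _ hj
        simp only [Finset.mem_insert, not_or] at hj
        simp only [hv₂def]
        rw [if_neg hj.2, if_neg hj.1, mul_zero]
      rw [← Finset.sum_subset (Finset.subset_univ (insert k (Λ₂ \ Λ₁))) hzero,
        Finset.sum_insert hknot]
      have h1 : w k * v₂ k = -s := by
        simp only [hv₂def]
        rw [if_neg hknot]; rw [if_pos trivial, mul_neg, mul_div_cancel₀ _ (hw k)]
      have h2 : ∑ j ∈ Λ₂ \ Λ₁, w j * v₂ j = s := by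
        apply Finset.sum_congr rfl
        intro j hj
        simp only [hv₂def]
        rw [if_pos hj]
      rw [h1, h2]; ring
    have hmem2 : v₂ ∈ Vsub w Λ₂ := by
      rw [mem_Vsub]
      refine ⟨hsum2, fun j hj => ?_⟩
      have hjk : j ≠ k := fun hc => hj (hc ▸ hk2)
      have h' : j ∉ Λ₂ \ Λ₁ := fun hc => hj (Finset.mem_sdiff.mp hc).1
      simp only [hv₂def]
      rw [if_neg h', if_neg hjk]
    have hmem1 : v - v₂ ∈ Vsub w Λ₁ := by
      rw [mem_Vsub]
      constructor
      · have : ∑ j, w j * (v - v₂) j = ∑ j, w j * v j - ∑ j, w j * v₂ j := by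
          rw [← Finset.sum_sub_distrib]
          apply Finset.sum_congr rfl
          intro j _; simp [Pi.sub_apply]; ring
        rw [this, hv.1, hsum2, sub_zero]
      · intro j hj
        by_cases hj2 : j ∈ Λ₂ \ Λ₁
        · have : v₂ j = v j := by simp only [hv₂def]; rw [if_pos hj2]
          simp [Pi.sub_apply, this]
        · have hjk : j ≠ k := fun hc => hj (hc ▸ hk1)
          have hv2j : v₂ j = 0 := by simp only [hv₂def]; rw [if_neg hj2, if_neg hjk]
          have hvj : v j = 0 := by
            apply hv.2
            intro hc
            rcases Finset.mem_union.mp hc with h' | h'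
            · exact hj h'
            · exact hj2 (Finset.mem_sdiff.mpr ⟨h', hj⟩)
          simp [Pi.sub_apply, hv2j, hvj]
    have := Submodule.add_mem_sup hmem1 hmem2
    simpa using this
end

section
/- Let w ∈ ℂⁿ have all entries non-zero, and for Λ ⊆ {1,…,n} let V_Λ = {v ∈ w^⊥ : v_j = 0 for all j ∉ Λ}. If Λ₁, Λ₂ are non-empty subsets with Λ₁ ∩ Λ₂ = ∅, then V_{Λ₁} + V_{Λ₂} is a subspace of V_{Λ₁ ∪ Λ₂} of codimension 1. -/
open Finset

lemma mem_Vsub_zero {n : ℕ} {w : Fin n → ℂ} {Λ : Finset (Fin n)} {v : Fin n → ℂ}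
    (hv : v ∈ Vsub w Λ) {j : Fin n} (hj : j ∉ Λ) : v j = 0 := by
  have h1 := (Submodule.mem_iInf _).mp hv.2 j
  exact (Submodule.mem_iInf _).mp h1 hj

set_option maxHeartbeats 800000 in
set_option synthInstance.maxHeartbeats 200000 in
lemma finrank_Vsub {n : ℕ} (w : Fin n → ℂ) (hw : ∀ j, w j ≠ 0) (Λ : Finset (Fin n))
    (hΛ : Λ.Nonempty) : Module.finrank ℂ (Vsub w Λ) = Λ.card - 1 := by
  classical
  set φ : (Fin n → ℂ) →ₗ[ℂ] ℂ := ∑ j, w j • (LinearMap.proj j) with hφ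
  set W : Submodule ℂ (Fin n → ℂ) :=
    ⨅ j ∈ {j | j ∉ Λ}, LinearMap.ker (LinearMap.proj j : (Fin n → ℂ) →ₗ[ℂ] ℂ) with hW
  have e : W ≃ₗ[ℂ] ((↑Λ : Set (Fin n)) → ℂ) :=
    LinearMap.iInfKerProjEquiv ℂ (fun _ => ℂ)
      (by intro S hS1 hS2 x hx; exact absurd (hS1 hx) (hS2 hx))
      (by intro x _; by_cases hx : x ∈ Λ <;> simp [hx])
  have hWrank : Module.finrank ℂ W = Λ.card := by
    rw [e.finrank_eq, Module.finrank_fintype_fun_eq_card]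
    simp
  set ψ : W →ₗ[ℂ] ℂ := φ.domRestrict W with hψ
  obtain ⟨j0, hj0⟩ := hΛ
  have hmem : (Pi.single j0 1 : Fin n → ℂ) ∈ W := by
    simp only [hW, Submodule.mem_iInf, LinearMap.mem_ker, LinearMap.proj_apply, Set.mem_setOf_eq]
    intro j hj
    exact Pi.single_eq_of_ne (by rintro rfl; exact hj hj0) 1
  have hval : ψ ⟨_, hmem⟩ = w j0 := by
    simp only [hψ, LinearMap.domRestrict_apply, hφ, LinearMap.sum_apply, LinearMap.smul_apply,
      LinearMap.proj_apply, smul_eq_mul]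
    rw [Finset.sum_eq_single j0]
    · simp
    · intro b _ hb; simp [Pi.single_eq_of_ne hb]
    · simp
  have hrange : LinearMap.range ψ = ⊤ := by
    rw [eq_top_iff]
    intro x _
    have : x = (x / w j0) • w j0 := by rw [smul_eq_mul, div_mul_cancel₀ _ (hw j0)]
    rw [this, ← hval]
    exact Submodule.smul_mem _ _ (LinearMap.mem_range_self ψ _)
  have hrn := LinearMap.finrank_range_add_finrank_ker ψ
  rw [hrange, finrank_top, Module.finrank_self, hWrank] at hrn
  have hle : Vsub w Λ ≤ W := by
    unfold Vsub
    exact inf_le_right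
  have hkereq : LinearMap.ker ψ = Submodule.comap W.subtype (Vsub w Λ) := by
    rw [hψ, LinearMap.ker_domRestrict]
    show _ = Submodule.comap W.subtype (LinearMap.ker φ ⊓ W)
    rw [Submodule.comap_inf, Submodule.comap_subtype_self, inf_top_eq]
  have hker : Module.finrank ℂ (LinearMap.ker ψ) = Module.finrank ℂ (Vsub w Λ) := by
    rw [hkereq]
    exact (Submodule.comapSubtypeEquivOfLe hle).finrank_eq
  omega

lemma Vsub_mono {n : ℕ} (w : Fin n → ℂ) {Λ Λ' : Finset (Fin n)} (h : Λ ⊆ Λ') :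
    Vsub w Λ ≤ Vsub w Λ' := by
  refine inf_le_inf le_rfl ?_
  exact biInf_mono fun j hj => fun hj' => hj (h hj')

/-- If `Λ₁, Λ₂` are non-empty and disjoint then `V_{Λ₁} + V_{Λ₂}` is a subspace of
`V_{Λ₁ ∪ Λ₂}` of codimension 1. -/
theorem stmt4 {n : ℕ} (w : Fin n → ℂ) (hw : ∀ j, w j ≠ 0)
    (Λ₁ Λ₂ : Finset (Fin n)) [DecidableEq (Fin n)]
    (h₁ : Λ₁.Nonempty) (h₂ : Λ₂.Nonempty) (h : Λ₁ ∩ Λ₂ = ∅) :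
    Vsub w Λ₁ ⊔ Vsub w Λ₂ ≤ Vsub w (Λ₁ ∪ Λ₂) ∧
      Module.finrank ℂ (Vsub w Λ₁ ⊔ Vsub w Λ₂ : Submodule ℂ (Fin n → ℂ)) + 1 =
        Module.finrank ℂ (Vsub w (Λ₁ ∪ Λ₂)) := by
  have hdisj : Disjoint Λ₁ Λ₂ := Finset.disjoint_iff_inter_eq_empty.mpr h
  constructor
  · exact sup_le (Vsub_mono w Finset.subset_union_left)
      (Vsub_mono w Finset.subset_union_right)
  · have hbot : Vsub w Λ₁ ⊓ Vsub w Λ₂ = ⊥ := by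
      rw [eq_bot_iff]
      rintro v ⟨hv1, hv2⟩
      have : v = 0 := by
        funext j
        by_cases hj : j ∈ Λ₁
        · exact mem_Vsub_zero hv2 (Finset.disjoint_left.mp hdisj hj)
        · exact mem_Vsub_zero hv1 hj
      simp [this]
    have hsum := Submodule.finrank_sup_add_finrank_inf_eq (Vsub w Λ₁) (Vsub w Λ₂)
    rw [hbot, finrank_bot, add_zero] at hsum
    rw [hsum, finrank_Vsub w hw Λ₁ h₁, finrank_Vsub w hw Λ₂ h₂,
      finrank_Vsub w hw (Λ₁ ∪ Λ₂) (h₁.mono Finset.subset_union_left),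
      Finset.card_union_of_disjoint hdisj]
    have := h₁.card_pos
    have := h₂.card_pos
    omega
end

section
/- Let t > 1 be an integer and u the real cube root of t³ − 1. If (x, y) ∈ ℤ² satisfies x³ − (t³−1)y³ = 1, then x − uy is a unit of norm 1 in ℤ[u], hence x − uy = (t − u)ⁿ for some integer n, and taking conjugates yields (t−u)ⁿ + ω(t−ωu)ⁿ + ω²(t−ω²u)ⁿ = 0 where ω is a primitive cube root of unity. -/
set_option linter.dupNamespace false
set_option maxHeartbeats 1000000

namespace St14x

/-! ### Polynomial identities -/

lemma I_mulR (a b c a' b' c' u d : ℝ) (hu : u^3 = d) :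
    (a + b*u + c*u^2) * (a' + b'*u + c'*u^2)
      = (a*a' + d*(b*c'+c*b')) + (a*b'+b*a'+d*(c*c'))*u + (a*c'+b*b'+c*a')*u^2 := by
  linear_combination ((1:ℝ)*c*c'*u + (1:ℝ)*c*b' + (1:ℝ)*b*c') * hu

lemma I_mulC (a b c a' b' c' u d ω : ℂ) (hω : ω^2+ω+1 = 0) (hu : u^3 = d) :
    (a + b*ω*u + c*ω^2*u^2) * (a' + b'*ω*u + c'*ω^2*u^2)
      = (a*a' + d*(b*c'+c*b')) + (a*b'+b*a'+d*(c*c'))*ω*u + (a*c'+b*b'+c*a')*ω^2*u^2 := by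
  linear_combination ((-1:ℂ)*c*c'*ω*u^4 + (1:ℂ)*c*c'*ω^2*u^4 + (-1:ℂ)*c*b'*u^3 + (1:ℂ)*c*b'*ω*u^3 + (-1:ℂ)*b*c'*u^3 + (1:ℂ)*b*c'*ω*u^3) * hω + ((1:ℂ)*c*c'*ω*u + (1:ℂ)*c*b' + (1:ℂ)*b*c') * hu

lemma I_nrm (a b c u d ω : ℂ) (hω : ω^2+ω+1 = 0) (hu : u^3 = d) :
    (a + b*u + c*u^2) * ((a + b*ω*u + c*ω^2*u^2) * (a + b*ω^2*u + c*ω*u^2))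
      = a^3 + d*b^3 + d^2*c^3 - 3*d*a*b*c := by
  linear_combination ((-1:ℂ)*c^3*u^6 + (1:ℂ)*c^3*ω*u^6 + (1:ℂ)*b*c^2*ω^2*u^5 + (1:ℂ)*b^2*c*ω^2*u^4 + (-1:ℂ)*b^3*u^3 + (1:ℂ)*b^3*ω*u^3 + (1:ℂ)*a*c^2*ω*u^4 + (3:ℂ)*a*b*c*u^3 + (-1:ℂ)*a*b*c*ω*u^3 + (1:ℂ)*a*b*c*ω^2*u^3 + (1:ℂ)*a*b^2*ω*u^2 + (1:ℂ)*a^2*c*u^2 + (1:ℂ)*a^2*b*u) * hω + ((1:ℂ)*c^3*d + (1:ℂ)*c^3*u^3 + (1:ℂ)*b^3 + (-3:ℂ)*a*b*c) * hu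

lemma I_coefA (a b c u ω : ℂ) (hω : ω^2+ω+1 = 0) :
    (a + b*u + c*u^2) + (a + b*ω*u + c*ω^2*u^2) + (a + b*ω^2*u + c*ω*u^2) = 3*a := by
  linear_combination ((1:ℂ)*c*u^2 + (1:ℂ)*b*u) * hω

lemma I_coefB (a b c u ω : ℂ) (hω : ω^2+ω+1 = 0) :
    (a + b*u + c*u^2) + ω^2*(a + b*ω*u + c*ω^2*u^2) + ω*(a + b*ω^2*u + c*ω*u^2) = 3*b*u := by
  linear_combination ((1:ℂ)*c*u^2 + (-1:ℂ)*c*ω*u^2 + (1:ℂ)*c*ω^2*u^2 + (-2:ℂ)*b*u + (2:ℂ)*b*ω*u + (1:ℂ)*a) * hω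

lemma I_coefC (a b c u ω : ℂ) (hω : ω^2+ω+1 = 0) :
    (a + b*u + c*u^2) + ω*(a + b*ω*u + c*ω^2*u^2) + ω^2*(a + b*ω^2*u + c*ω*u^2) = 3*c*u^2 := by
  linear_combination ((-2:ℂ)*c*u^2 + (2:ℂ)*c*ω*u^2 + (1:ℂ)*b*u + (-1:ℂ)*b*ω*u + (1:ℂ)*b*ω^2*u + (1:ℂ)*a) * hω

lemma I_disc (a b c u d ω : ℂ) (hω : ω^2+ω+1 = 0) (hu : u^3 = d) :
    ((a + b*u + c*u^2) - (a + b*ω*u + c*ω^2*u^2)) * (((a + b*u + c*u^2) - (a + b*ω^2*u + c*ω*u^2)) * ((a + b*ω*u + c*ω^2*u^2) - (a + b*ω^2*u + c*ω*u^2)))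
      = 3*(ω-ω^2)*d*(b^3-d*c^3) := by
  linear_combination ((-3:ℂ)*c^3*d^2 + (3:ℂ)*c^3*u^6 + (2:ℂ)*c^3*ω*u^6 + (-3:ℂ)*c^3*ω^2*u^6 + (1:ℂ)*c^3*ω^3*u^6 + (-1:ℂ)*b*c^2*ω*u^5 + (3:ℂ)*b*c^2*ω^2*u^5 + (-3:ℂ)*b*c^2*ω^3*u^5 + (1:ℂ)*b*c^2*ω^4*u^5 + (1:ℂ)*b^2*c*ω*u^4 + (-3:ℂ)*b^2*c*ω^2*u^4 + (3:ℂ)*b^2*c*ω^3*u^4 + (-1:ℂ)*b^2*c*ω^4*u^4 + (3:ℂ)*b^3*d + (-3:ℂ)*b^3*u^3 + (-2:ℂ)*b^3*ω*u^3 + (3:ℂ)*b^3*ω^2*u^3 + (-1:ℂ)*b^3*ω^3*u^3) * hω + ((-3:ℂ)*c^3*d + (-3:ℂ)*c^3*u^3 + (-6:ℂ)*c^3*ω*d + (-6:ℂ)*c^3*ω*u^3 + (3:ℂ)*b^3 + (6:ℂ)*b^3*ω) * hu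

lemma I_sq (ω : ℂ) (hω : ω^2+ω+1 = 0) : (3*(ω-ω^2))^2 = -27 := by
  linear_combination ((27:ℂ) + (-27:ℂ)*ω + (9:ℂ)*ω^2) * hω

lemma I_omega3 (ω : ℂ) (hω : ω^2+ω+1 = 0) : ω^3 = 1 := by
  linear_combination (ω - 1) * hω

/-! ### Basic facts about ω -/

lemma hom2 {ω : ℂ} (hω : IsPrimitiveRoot ω 3) : ω^2 + ω + 1 = 0 := by
  have h3 : ω^3 = 1 := hω.pow_eq_one
  have hne : ω ≠ 1 := hω.ne_one (by norm_num)
  have : (ω - 1) * (ω^2 + ω + 1) = 0 := by linear_combination h3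
  rcases mul_eq_zero.mp this with h | h
  · exact absurd (sub_eq_zero.mp h) hne
  · exact h

lemma conj_omega {ω : ℂ} (hω2 : ω^2 + ω + 1 = 0) : (starRingEnd ℂ) ω = ω^2 := by
  have h2 : (starRingEnd ℂ ω)^2 + starRingEnd ℂ ω + 1 = 0 := by
    have := congrArg (starRingEnd ℂ) hω2
    simpa [map_add, map_pow, map_one] using this
  have hsplit : (ω - starRingEnd ℂ ω) * (ω + starRingEnd ℂ ω + 1) = 0 := by
    linear_combination hω2 - h2
  rcases mul_eq_zero.mp hsplit with h | h
  · exfalso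
    have heq : ω = starRingEnd ℂ ω := sub_eq_zero.mp h
    have him : ω.im = 0 := by
      have := congrArg Complex.im heq
      simp [Complex.conj_im] at this
      linarith
    have hre := congrArg Complex.re hω2
    simp [Complex.add_re, Complex.one_re, sq, Complex.mul_re, him] at hre
    nlinarith [hre, sq_nonneg (2*ω.re + 1)]
  · linear_combination h - hω2

/-! ### Irrationality and linear independence -/

lemma cube_ne {t : ℤ} (ht : 1 < t) (m : ℤ) : m^3 ≠ t^3 - 1 := by
  intro hm
  rcases le_or_gt m 0 with h | h
  · nlinarith [sq_nonneg m, sq_nonneg t, mul_nonneg (sq_nonneg m) (neg_nonneg.mpr h)]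
  · rcases lt_or_ge m t with h2 | h2
    · have h3 : m ≤ t - 1 := by omega
      nlinarith [pow_le_pow_left₀ h.le h3 3]
    · nlinarith [pow_le_pow_left₀ (by positivity : (0:ℤ) ≤ t) h2 3]

lemma irr_u {t : ℤ} {u : ℝ} (ht : 1 < t) (hu : u^3 = ((t:ℝ))^3 - 1) : Irrational u := by
  have hcast : u^3 = ((t^3 - 1 : ℤ) : ℝ) := by push_cast; linarith [hu]
  refine irrational_nrt_of_notint_nrt 3 (t^3-1) hcast ?_ (by norm_num)
  rintro ⟨m, rfl⟩
  exact cube_ne ht m (by exact_mod_cast hcast)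

lemma not_rat {u : ℝ} (hirr : Irrational u) (p q : ℤ) (hq : q ≠ 0) (hpq : (q:ℝ)*u = p) :
    False := by
  have hq' : (q:ℝ) ≠ 0 := Int.cast_ne_zero.mpr hq
  have huq : u = ((p / q : ℚ) : ℝ) := by
    push_cast
    field_simp
    linear_combination hpq
  exact hirr ⟨_, huq.symm⟩

lemma linind {t : ℤ} {u : ℝ} (ht : 1 < t) (hu : u^3 = ((t:ℝ))^3 - 1) (hupos : 0 < u)
    (a b c : ℤ) (h : (a:ℝ) + (b:ℝ)*u + (c:ℝ)*u^2 = 0) : a = 0 ∧ b = 0 ∧ c = 0 := by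
  have hirr := irr_u ht hu
  have hd : u^3 = ((t^3-1 : ℤ):ℝ) := by push_cast; linarith [hu]
  by_cases hc : c = 0
  · subst hc
    by_cases hb : b = 0
    · subst hb
      have : (a:ℝ) = 0 := by push_cast at h; linarith [h]
      exact ⟨by exact_mod_cast this, rfl, rfl⟩
    · exfalso
      refine not_rat hirr (-a) b hb ?_
      push_cast
      push_cast at h
      linarith [h]
  · exfalso
    have h2 : ((t:ℝ)^3-1)*(c:ℝ) + (a:ℝ)*u + (b:ℝ)*u^2 = 0 := by
      linear_combination u * h - (c:ℝ) * hu
    by_cases hk : a*c - b^2 = 0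
    · have key : (2*(c:ℝ)*u + (b:ℝ))^2 = (b:ℝ)^2 - 4*((a:ℝ)*(c:ℝ)) := by
        linear_combination (4*(c:ℝ))*h
      have hk2 : a*c = b^2 := by omega
      have hk' : (a:ℝ)*(c:ℝ) = (b:ℝ)^2 := by exact_mod_cast hk2
      have hb0 : (b:ℝ) = 0 := by nlinarith [sq_nonneg (2*(c:ℝ)*u + (b:ℝ))]
      have hb0' : b = 0 := by exact_mod_cast hb0
      subst hb0'
      have ha0 : a = 0 := by
        have h0 : a*c = 0 := by omega
        rcases mul_eq_zero.mp h0 with h' | h'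
        · exact h'
        · exact absurd h' hc
      subst ha0
      have hcu : (c:ℝ) * u^2 = 0 := by push_cast at h; linarith [h]
      rcases mul_eq_zero.mp hcu with h' | h'
      · exact hc (by exact_mod_cast h')
      · nlinarith [h', hupos]
    · refine not_rat hirr (a*b - (t^3-1)*c^2) (a*c - b^2) hk ?_
      push_cast
      linear_combination (c:ℝ)*h2 - (b:ℝ)*h

/-! ### Triples representing elements of ℤ[u] -/

def tm (d : ℤ) (v w : ℤ×ℤ×ℤ) : ℤ×ℤ×ℤ :=
  (v.1*w.1 + d*(v.2.1*w.2.2 + v.2.2*w.2.1),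
   v.1*w.2.1 + v.2.1*w.1 + d*(v.2.2*w.2.2),
   v.1*w.2.2 + v.2.1*w.2.1 + v.2.2*w.1)

def nr (d : ℤ) (v : ℤ×ℤ×ℤ) : ℤ :=
  v.1^3 + d*v.2.1^3 + d^2*v.2.2^3 - 3*d*v.1*v.2.1*v.2.2

def em (u : ℝ) (v : ℤ×ℤ×ℤ) : ℝ := (v.1:ℝ) + (v.2.1:ℝ)*u + (v.2.2:ℝ)*u^2

noncomputable def ec (u : ℝ) (ω : ℂ) (v : ℤ×ℤ×ℤ) : ℂ :=
  (v.1:ℂ) + (v.2.1:ℂ)*ω*(u:ℂ) + (v.2.2:ℂ)*ω^2*(u:ℂ)^2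

section Main

variable {t : ℤ} {u : ℝ} {ω : ℂ}

lemma huc (hu : u^3 = ((t:ℝ))^3 - 1) : (u:ℂ)^3 = ((t:ℂ))^3 - 1 := by
  exact_mod_cast congrArg (Complex.ofReal) hu

lemma em_mul (hu : u^3 = ((t:ℝ))^3 - 1) (v w : ℤ×ℤ×ℤ) :
    em u (tm (t^3-1) v w) = em u v * em u w := by
  obtain ⟨a,b,c⟩ := v; obtain ⟨a',b',c'⟩ := w
  simp only [em, tm]
  push_cast
  linear_combination (I_mulR (a:ℝ) b c a' b' c' u ((t:ℝ)^3-1) hu).symm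

lemma ec_mul (hω2 : ω^2 + ω + 1 = 0) (hu : u^3 = ((t:ℝ))^3 - 1) (v w : ℤ×ℤ×ℤ) :
    ec u ω (tm (t^3-1) v w) = ec u ω v * ec u ω w := by
  obtain ⟨a,b,c⟩ := v; obtain ⟨a',b',c'⟩ := w
  simp only [ec, tm]
  push_cast
  linear_combination (I_mulC (a:ℂ) b c a' b' c' u ((t:ℂ)^3-1) ω hω2 (huc hu)).symm

lemma conj_ec (hω2 : ω^2 + ω + 1 = 0) (v : ℤ×ℤ×ℤ) :
    (starRingEnd ℂ) (ec u ω v) = (v.1:ℂ) + (v.2.1:ℂ)*ω^2*(u:ℂ) + (v.2.2:ℂ)*ω*(u:ℂ)^2 := by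
  have h3 : ω^3 = 1 := I_omega3 ω hω2
  simp only [ec, map_add, map_mul, map_pow, Complex.conj_ofReal, map_intCast, conj_omega hω2]
  linear_combination ((v.2.2:ℂ) * (u:ℂ)^2 * ω) * h3

lemma em_ec (v : ℤ×ℤ×ℤ) :
    ((em u v : ℝ) : ℂ) = (v.1:ℂ) + (v.2.1:ℂ)*(u:ℂ) + (v.2.2:ℂ)*(u:ℂ)^2 := by
  simp only [em]; push_cast; ring

lemma nrm_c (hω2 : ω^2 + ω + 1 = 0) (hu : u^3 = ((t:ℝ))^3 - 1) (v : ℤ×ℤ×ℤ) :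
    ((nr (t^3-1) v : ℤ) : ℂ) = ((em u v : ℝ):ℂ) * (ec u ω v * (starRingEnd ℂ) (ec u ω v)) := by
  rw [conj_ec hω2, em_ec]
  obtain ⟨a,b,c⟩ := v
  simp only [nr, ec]
  push_cast
  linear_combination (I_nrm (a:ℂ) b c u ((t:ℂ)^3-1) ω hω2 (huc hu)).symm

lemma nrm_r (hω2 : ω^2 + ω + 1 = 0) (hu : u^3 = ((t:ℝ))^3 - 1) (v : ℤ×ℤ×ℤ) :
    ((nr (t^3-1) v : ℤ) : ℝ) = em u v * Complex.normSq (ec u ω v) := by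
  have h := nrm_c hω2 hu v
  rw [Complex.mul_conj] at h
  exact_mod_cast h

lemma nrm_mul (hω2 : ω^2 + ω + 1 = 0) (hu : u^3 = ((t:ℝ))^3 - 1) (v w : ℤ×ℤ×ℤ) :
    nr (t^3-1) (tm (t^3-1) v w) = nr (t^3-1) v * nr (t^3-1) w := by
  have h1 := nrm_c (t := t) hω2 hu (tm (t^3-1) v w)
  rw [em_mul hu, ec_mul hω2 hu, map_mul] at h1
  have h2 := nrm_c (t := t) hω2 hu v
  have h3 := nrm_c (t := t) hω2 hu w
  have key : ((nr (t^3-1) (tm (t^3-1) v w) : ℤ) : ℂ)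
      = ((nr (t^3-1) v : ℤ) : ℂ) * ((nr (t^3-1) w : ℤ) : ℂ) := by
    rw [h1, h2, h3]; push_cast; ring
  exact_mod_cast key

/-! ### Powers -/

def pw (d : ℤ) (v : ℤ×ℤ×ℤ) : ℕ → ℤ×ℤ×ℤ
  | 0 => (1,0,0)
  | n+1 => tm d v (pw d v n)

lemma em_one : em u (1,0,0) = 1 := by simp [em]

lemma ec_one : ec u ω (1,0,0) = 1 := by simp [ec]

lemma nr_one (d : ℤ) : nr d (1,0,0) = 1 := by simp [nr]

lemma em_pw (hu : u^3 = ((t:ℝ))^3 - 1) (v : ℤ×ℤ×ℤ) (n : ℕ) :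
    em u (pw (t^3-1) v n) = (em u v)^n := by
  induction n with
  | zero => simpa [pw] using em_one
  | succ n ih => rw [pw, em_mul hu, ih, pow_succ]; ring

lemma ec_pw (hω2 : ω^2 + ω + 1 = 0) (hu : u^3 = ((t:ℝ))^3 - 1) (v : ℤ×ℤ×ℤ) (n : ℕ) :
    ec u ω (pw (t^3-1) v n) = (ec u ω v)^n := by
  induction n with
  | zero => simpa [pw] using ec_one
  | succ n ih => rw [pw, ec_mul hω2 hu, ih, pow_succ]; ring

lemma nr_pw (hω2 : ω^2 + ω + 1 = 0) (hu : u^3 = ((t:ℝ))^3 - 1) (v : ℤ×ℤ×ℤ)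
    (h1 : nr (t^3-1) v = 1) (n : ℕ) : nr (t^3-1) (pw (t^3-1) v n) = 1 := by
  induction n with
  | zero => simpa [pw] using nr_one (t^3-1)
  | succ n ih => rw [pw, nrm_mul hω2 hu, h1, ih, one_mul]

lemma em_inj (ht : 1 < t) (hu : u^3 = ((t:ℝ))^3 - 1) (hupos : 0 < u)
    {v w : ℤ×ℤ×ℤ} (h : em u v = em u w) : v = w := by
  obtain ⟨a,b,c⟩ := v; obtain ⟨a',b',c'⟩ := w
  simp only [em] at h
  have h0 : ((a-a' : ℤ):ℝ) + ((b-b' : ℤ):ℝ)*u + ((c-c' : ℤ):ℝ)*u^2 = 0 := by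
    push_cast
    linarith [h]
  obtain ⟨h1,h2,h3⟩ := linind ht hu hupos _ _ _ h0
  simp only [Prod.mk.injEq]
  omega

/-! ### Bounds on u -/

lemma ht2 (ht : 1 < t) : (2:ℝ) ≤ (t:ℝ) := by exact_mod_cast ht

lemma u_lt_t (ht : 1 < t) (hu : u^3 = ((t:ℝ))^3 - 1) (hupos : 0 < u) : u < (t:ℝ) := by
  by_contra hcon
  push_neg at hcon
  have : ((t:ℝ))^3 ≤ u^3 := pow_le_pow_left₀ (by linarith [ht2 ht]) hcon 3
  linarith

lemma u_gt (ht : 1 < t) (hu : u^3 = ((t:ℝ))^3 - 1) (hupos : 0 < u) : (t:ℝ) - 1 < u := by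
  by_contra hcon
  push_neg at hcon
  have : u^3 ≤ ((t:ℝ)-1)^3 := pow_le_pow_left₀ hupos.le hcon 3
  nlinarith [ht2 ht]

lemma one_le_u (ht : 1 < t) (hu : u^3 = ((t:ℝ))^3 - 1) (hupos : 0 < u) : 1 ≤ u := by
  have := u_gt ht hu hupos
  have := ht2 ht
  linarith

lemma epsE (hu : u^3 = ((t:ℝ))^3 - 1) :
    ((t:ℝ) - u) * ((t:ℝ)^2 + (t:ℝ)*u + u^2) = 1 := by linear_combination -hu

lemma E_lt (ht : 1 < t) (hu : u^3 = ((t:ℝ))^3 - 1) (hupos : 0 < u) :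
    (t:ℝ)^2 + (t:ℝ)*u + u^2 < 3*(t:ℝ)^2 := by
  have h1 := u_lt_t ht hu hupos
  have h2 := ht2 ht
  nlinarith

lemma E_gt (ht : 1 < t) (hu : u^3 = ((t:ℝ))^3 - 1) (hupos : 0 < u) :
    1 < (t:ℝ)^2 + (t:ℝ)*u + u^2 := by
  have h1 := one_le_u ht hu hupos
  have h2 := ht2 ht
  nlinarith

/-! ### Units -/

def IsU (t : ℤ) (u : ℝ) (w : ℝ) : Prop := ∃ v : ℤ×ℤ×ℤ, nr (t^3-1) v = 1 ∧ em u v = w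

lemma IsU_mul (hω2 : ω^2 + ω + 1 = 0) (hu : u^3 = ((t:ℝ))^3 - 1) {w₁ w₂ : ℝ}
    (h1 : IsU t u w₁) (h2 : IsU t u w₂) : IsU t u (w₁ * w₂) := by
  obtain ⟨v₁, hn₁, he₁⟩ := h1
  obtain ⟨v₂, hn₂, he₂⟩ := h2
  exact ⟨tm (t^3-1) v₁ v₂, by rw [nrm_mul hω2 hu, hn₁, hn₂, one_mul],
    by rw [em_mul hu, he₁, he₂]⟩

lemma IsU_pow (hω2 : ω^2 + ω + 1 = 0) (hu : u^3 = ((t:ℝ))^3 - 1) {w : ℝ}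
    (h : IsU t u w) (n : ℕ) : IsU t u (w^n) := by
  obtain ⟨v, hn, he⟩ := h
  exact ⟨pw (t^3-1) v n, nr_pw hω2 hu v hn n, by rw [em_pw hu, he]⟩

lemma IsU_one : IsU t u 1 := ⟨(1,0,0), nr_one _, em_one⟩

lemma IsU_E : IsU t u ((t:ℝ)^2 + (t:ℝ)*u + u^2) := by
  refine ⟨(t^2, t, 1), ?_, ?_⟩
  · simp only [nr]; ring
  · simp only [em]; push_cast; ring

lemma IsU_eps : IsU t u ((t:ℝ) - u) := by
  refine ⟨(t, -1, 0), ?_, ?_⟩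
  · simp only [nr]; ring
  · simp only [em]; push_cast; ring

lemma tm_inv {v : ℤ×ℤ×ℤ} (h1 : nr (t^3-1) v = 1) :
    tm (t^3-1) v (v.1^2 - (t^3-1)*v.2.1*v.2.2, (t^3-1)*v.2.2^2 - v.1*v.2.1,
      v.2.1^2 - v.1*v.2.2) = (1,0,0) := by
  obtain ⟨a,b,c⟩ := v
  simp only [nr] at h1
  simp only [tm, Prod.mk.injEq]
  refine ⟨by linear_combination h1, by ring, by ring⟩

lemma IsU_inv (hω2 : ω^2 + ω + 1 = 0) (hu : u^3 = ((t:ℝ))^3 - 1) {w : ℝ}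
    (h : IsU t u w) : IsU t u w⁻¹ := by
  obtain ⟨v, hn, he⟩ := h
  set iv : ℤ×ℤ×ℤ := (v.1^2 - (t^3-1)*v.2.1*v.2.2, (t^3-1)*v.2.2^2 - v.1*v.2.1,
      v.2.1^2 - v.1*v.2.2) with hiv
  have htm : tm (t^3-1) v iv = (1,0,0) := tm_inv hn
  have hninv : nr (t^3-1) iv = 1 := by
    have := nrm_mul hω2 hu v iv
    rw [htm, nr_one, hn, one_mul] at this
    omega
  have heinv : em u v * em u iv = 1 := by
    rw [← em_mul hu, htm, em_one]
  refine ⟨iv, hninv, ?_⟩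
  rw [← he]
  exact (inv_eq_of_mul_eq_one_right heinv).symm

lemma nr_pos_em (hω2 : ω^2 + ω + 1 = 0) (hu : u^3 = ((t:ℝ))^3 - 1) {v : ℤ×ℤ×ℤ}
    (h1 : nr (t^3-1) v = 1) : 0 < em u v ∧ em u v * Complex.normSq (ec u ω v) = 1 := by
  have h := nrm_r hω2 hu v
  rw [h1, Int.cast_one] at h
  have hns := Complex.normSq_nonneg (ec u ω v)
  constructor
  · rcases lt_trichotomy (em u v) 0 with hneg | hzero | hpos
    · nlinarith [mul_nonpos_of_nonpos_of_nonneg hneg.le hns]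
    · rw [hzero] at h; simp at h
    · exact hpos
  · linarith [h]

/-! ### Coefficient bounds -/

lemma abs_omega (hω2 : ω^2 + ω + 1 = 0) : ‖ω‖ = 1 := by
  have h3 : ω^3 = 1 := I_omega3 ω hω2
  have habs : (‖ω‖)^3 = 1 := by
    have := congrArg norm h3
    rwa [norm_pow, norm_one] at this
  have hfac : (‖ω‖ - 1) * ((‖ω‖)^2 + ‖ω‖ + 1) = 0 := by
    linear_combination habs
  rcases mul_eq_zero.mp hfac with h | h
  · linarith [sub_eq_zero.mp h]
  · nlinarith [norm_nonneg ω]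

lemma bnd3 {q uu B : ℝ} (hu1 : 1 ≤ uu) (hlow : -1 ≤ 3*q*uu) (hhigh : 3*q*uu ≤ B)
    (hB : 1 ≤ B) : |3*q| ≤ B := by
  rw [abs_le]
  constructor
  · rcases le_or_gt 0 q with hb | hb
    · nlinarith
    · nlinarith [mul_nonpos_of_nonpos_of_nonneg (by linarith : 3*q ≤ 0) (by linarith : 0 ≤ uu - 1)]
  · rcases le_or_gt 0 q with hb | hb
    · nlinarith [mul_nonneg (by linarith : 0 ≤ 3*q) (by linarith : 0 ≤ uu - 1)]
    · nlinarith

lemma int_bound {b t : ℤ} (h : |3*(b:ℝ)| ≤ 3*(t:ℝ)^2 + 2) : |b| ≤ t^2 + 1 := by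
  have : |(3*b : ℤ)| ≤ 3*t^2 + 2 := by
    have h2 : |((3*b : ℤ):ℝ)| ≤ ((3*t^2+2 : ℤ):ℝ) := by push_cast; push_cast at h; linarith [h]
    exact_mod_cast (by rwa [← Int.cast_abs] at h2 : ((|3*b| : ℤ):ℝ) ≤ ((3*t^2+2 : ℤ):ℝ))
  have h3 : 3*|b| ≤ 3*t^2+2 := by rwa [abs_mul, abs_of_nonneg (by norm_num : (0:ℤ) ≤ 3)] at this
  omega

lemma coeff_bound (ht : 1 < t) (hω2 : ω^2 + ω + 1 = 0) (hu : u^3 = ((t:ℝ))^3 - 1)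
    (hupos : 0 < u) {v : ℤ×ℤ×ℤ} (h1 : nr (t^3-1) v = 1)
    (hw1 : 1 ≤ em u v) (hwB : em u v ≤ 3*(t:ℝ)^2) :
    |v.1| ≤ t^2 + 1 ∧ |v.2.1| ≤ t^2 + 1 ∧ |v.2.2| ≤ t^2 + 1 := by
  obtain ⟨hpos, hns⟩ := nr_pos_em hω2 hu h1
  have hu1 := one_le_u ht hu hupos
  have hB1 : (1:ℝ) ≤ 3*(t:ℝ)^2 + 2 := by nlinarith [ht2 ht]
  have habs : ‖ec u ω v‖ ≤ 1 := by
    have hsq := Complex.sq_norm (ec u ω v)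
    nlinarith [norm_nonneg (ec u ω v), Complex.normSq_nonneg (ec u ω v),
      mul_nonneg (by linarith : (0:ℝ) ≤ em u v - 1) (Complex.normSq_nonneg (ec u ω v))]
  have habsw : ‖ω‖ = 1 := abs_omega hω2
  -- coefficient a
  have hA : ((em u v : ℝ):ℂ) + (ec u ω v + (starRingEnd ℂ) (ec u ω v)) = ((3*v.1 : ℤ):ℂ) := by
    rw [conj_ec hω2, em_ec]
    simp only [ec]
    push_cast
    linear_combination I_coefA (v.1:ℂ) v.2.1 v.2.2 u ω hω2
  have hAre := congrArg Complex.re hA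
  simp only [Complex.add_re, Complex.ofReal_re, Complex.conj_re, Complex.intCast_re] at hAre
  have hre1 : |(ec u ω v).re| ≤ 1 := le_trans (Complex.abs_re_le_norm _) habs
  have hra : |v.1| ≤ t^2 + 1 := by
    apply int_bound (t := t)
    rw [abs_le] at hre1 ⊢
    push_cast at hAre ⊢
    constructor <;> nlinarith [hAre, hre1.1, hre1.2]
  -- coefficient b
  have hBconj : (starRingEnd ℂ) (ω^2 * ec u ω v) = ω * (starRingEnd ℂ) (ec u ω v) := by
    rw [map_mul, map_pow, conj_omega hω2]
    linear_combination ((starRingEnd ℂ) (ec u ω v) * ((-1:ℂ)*ω + (1:ℂ)*ω^2)) * hω2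
  have hB : ((em u v : ℝ):ℂ) + (ω^2 * ec u ω v + (starRingEnd ℂ) (ω^2 * ec u ω v))
      = ((((3*v.2.1 : ℤ):ℝ) * u : ℝ):ℂ) := by
    rw [hBconj, conj_ec hω2, em_ec]
    simp only [ec]
    push_cast
    linear_combination I_coefB (v.1:ℂ) v.2.1 v.2.2 u ω hω2
  have hBre := congrArg Complex.re hB
  simp only [Complex.add_re, Complex.ofReal_re, Complex.conj_re] at hBre
  have habsB : |(ω^2 * ec u ω v).re| ≤ 1 := by
    refine le_trans (Complex.abs_re_le_norm _) ?_
    rw [norm_mul, norm_pow, habsw]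
    simpa using habs
  have hrb : |v.2.1| ≤ t^2 + 1 := by
    apply int_bound (t := t)
    have heq : 3*(v.2.1:ℝ)*u = em u v + 2*(ω^2 * ec u ω v).re := by
      push_cast at hBre; linarith [hBre]
    rw [abs_le] at habsB
    refine bnd3 hu1 (by nlinarith [habsB.1, habsB.2]) (by nlinarith [habsB.1, habsB.2]) hB1
  -- coefficient c
  have hCconj : (starRingEnd ℂ) (ω * ec u ω v) = ω^2 * (starRingEnd ℂ) (ec u ω v) := by
    rw [map_mul, conj_omega hω2]
  have hC : ((em u v : ℝ):ℂ) + (ω * ec u ω v + (starRingEnd ℂ) (ω * ec u ω v))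
      = ((((3*v.2.2 : ℤ):ℝ) * u^2 : ℝ):ℂ) := by
    rw [hCconj, conj_ec hω2, em_ec]
    simp only [ec]
    push_cast
    linear_combination I_coefC (v.1:ℂ) v.2.1 v.2.2 u ω hω2
  have hCre := congrArg Complex.re hC
  simp only [Complex.add_re, Complex.ofReal_re, Complex.conj_re] at hCre
  have habsC : |(ω * ec u ω v).re| ≤ 1 := by
    refine le_trans (Complex.abs_re_le_norm _) ?_
    rw [norm_mul, habsw]
    simpa using habs
  have hrc : |v.2.2| ≤ t^2 + 1 := by
    apply int_bound (t := t)
    have heq : 3*(v.2.2:ℝ)*u^2 = em u v + 2*(ω * ec u ω v).re := by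
      push_cast at hCre; linarith [hCre]
    rw [abs_le] at habsC
    refine bnd3 (by nlinarith : (1:ℝ) ≤ u^2) (by nlinarith [habsC.1, habsC.2])
      (by nlinarith [habsC.1, habsC.2]) hB1
  exact ⟨hra, hrb, hrc⟩

/-! ### No unit strictly between 1 and √E -/

lemma arith_contra (tr w : ℝ) (ht : 2 ≤ tr) (hw : 1 < w) (hw2 : w^2 ≤ 3*tr^2)
    (h : 27*((tr^3-1)^2) * w ≤ 4*(w+1)^4) : False := by
  rcases le_or_gt w tr with hc | hc
  · nlinarith [sq_nonneg (tr-2), sq_nonneg tr, sq_nonneg (tr^2-tr), sq_nonneg (tr^3-tr),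
      mul_pos (by positivity : (0:ℝ) < tr) (by positivity : (0:ℝ) < tr)]
  · have hw3t : w ≤ 3*tr := by nlinarith
    have h1 : (w+1)^2 ≤ 3*tr^2 + 6*tr + 1 := by nlinarith
    have h2 : 4*(w+1)^4 ≤ 4*(3*tr^2+6*tr+1)^2 := by nlinarith [sq_nonneg (w+1)]
    have h3 : 27*((tr^3-1)^2)*tr ≤ 27*((tr^3-1)^2)*w := by nlinarith [sq_nonneg (tr^3-1)]
    nlinarith [sq_nonneg (tr-2), sq_nonneg (tr^2-2*tr), sq_nonneg (tr^3-2*tr^2),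
      mul_pos (by positivity : (0:ℝ) < tr) (by positivity : (0:ℝ) < tr)]

lemma normSq3 (hω2 : ω^2 + ω + 1 = 0) : Complex.normSq (3*(ω-ω^2)) = 27 := by
  have h := I_sq ω hω2
  have h2 := congrArg Complex.normSq h
  rw [map_pow] at h2
  have h27 : Complex.normSq (-27 : ℂ) = 729 := by
    have : (-27 : ℂ) = ((-27 : ℝ) : ℂ) := by norm_num
    rw [this, Complex.normSq_ofReal]; norm_num
  rw [h27] at h2
  have hnn := Complex.normSq_nonneg (3*(ω-ω^2))
  have hfac : (Complex.normSq (3*(ω-ω^2)) - 27) * (Complex.normSq (3*(ω-ω^2)) + 27) = 0 := by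
    linear_combination h2
  rcases mul_eq_zero.mp hfac with h' | h'
  · linarith [sub_eq_zero.mp h']
  · linarith

lemma int_sq_ge_one {m : ℤ} (hm : m ≠ 0) : (1:ℝ) ≤ (m:ℝ)^2 := by
  have h1 : 1 ≤ |m| := Int.one_le_abs hm
  have h2 : (1:ℤ) ≤ m^2 := by nlinarith [sq_abs m, h1, abs_nonneg m]
  exact_mod_cast h2

lemma no_small (ht : 1 < t) (hω2 : ω^2 + ω + 1 = 0) (hu : u^3 = ((t:ℝ))^3 - 1)
    (hupos : 0 < u) {v : ℤ×ℤ×ℤ} (h1 : nr (t^3-1) v = 1)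
    (hgt : 1 < em u v) (hsq : (em u v)^2 ≤ (t:ℝ)^2 + (t:ℝ)*u + u^2) : False := by
  obtain ⟨hpos, hns⟩ := nr_pos_em hω2 hu h1
  have hirr := irr_u ht hu
  obtain ⟨a,b,c⟩ := v
  by_cases hbc : b = 0 ∧ c = 0
  · obtain ⟨hb0, hc0⟩ := hbc
    subst hb0; subst hc0
    simp only [nr] at h1
    have ha : a = 1 := by nlinarith [h1, sq_nonneg a, sq_nonneg (a-1), sq_nonneg (a+1)]
    subst ha
    simp only [em] at hgt
    push_cast at hgt
    linarith
  · have hm : b^3 - (t^3-1)*c^3 ≠ 0 := by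
      intro h0
      by_cases hc : c = 0
      · subst hc
        have hb : b = 0 := by
          have hb3 : b^3 = 0 := by linear_combination h0
          exact pow_eq_zero_iff (by norm_num : (3:ℕ) ≠ 0) |>.mp hb3
        exact hbc ⟨hb, rfl⟩
      · have h0R : (b:ℝ)^3 - ((t:ℝ)^3-1)*(c:ℝ)^3 = 0 := by
          have : ((b^3 - (t^3-1)*c^3 : ℤ):ℝ) = 0 := by rw [h0]; norm_num
          push_cast at this
          linarith [this]
        have hcube : ((c:ℝ)*u)^3 = ((b:ℝ))^3 := by
          linear_combination (c:ℝ)^3 * hu - h0R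
        have hcu : (c:ℝ)*u = (b:ℝ) :=
          (Odd.strictMono_pow (R := ℝ) (⟨1, by norm_num⟩ : Odd 3)).injective hcube
        exact not_rat hirr b c hc hcu
    -- the discriminant identity
    set w := em u (a,b,c) with hwdef
    set e := ec u ω (a,b,c) with hedef
    have hD : (((w:ℝ):ℂ) - e) * ((((w:ℝ):ℂ) - (starRingEnd ℂ) e) * (e - (starRingEnd ℂ) e))
        = 3*(ω-ω^2)*(((t:ℂ)^3-1)*((b:ℂ)^3 - ((t:ℂ)^3-1)*(c:ℂ)^3)) := by
      rw [hedef, conj_ec hω2, hwdef, em_ec]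
      simp only [ec]
      push_cast
      linear_combination I_disc (a:ℂ) b c u ((t:ℂ)^3-1) ω hω2 (huc hu)
    have hD2 := congrArg Complex.normSq hD
    have hsub : ((w:ℝ):ℂ) - (starRingEnd ℂ) e = (starRingEnd ℂ) (((w:ℝ):ℂ) - e) := by
      rw [map_sub, Complex.conj_ofReal]
    have him : Complex.normSq (((2 * e.im : ℝ)) * Complex.I) = 4 * e.im^2 := by
      rw [map_mul, Complex.normSq_ofReal, Complex.normSq_I]
      ring
    have hdC : ((t:ℂ)^3 - 1) = (((t:ℝ)^3 - 1 : ℝ):ℂ) := by push_cast; ring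
    have hmC : ((b:ℂ)^3 - ((t:ℂ)^3-1)*(c:ℂ)^3) = ((((b:ℝ)^3 - ((t:ℝ)^3-1)*(c:ℝ)^3) : ℝ):ℂ) := by
      push_cast; ring
    rw [map_mul, map_mul, map_mul, map_mul, hsub, Complex.normSq_conj,
      Complex.sub_conj, him] at hD2
    have h3a : Complex.normSq (3:ℂ) * Complex.normSq (ω - ω^2) = 27 := by
      rw [← map_mul]; exact normSq3 hω2
    rw [map_mul, hmC, hdC, Complex.normSq_ofReal, Complex.normSq_ofReal, h3a] at hD2
    -- bounds
    have habse : ‖e‖ ≤ 1 := by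
      have hsqe := Complex.sq_norm e
      nlinarith [norm_nonneg e, Complex.normSq_nonneg e,
        mul_nonneg (by linarith : (0:ℝ) ≤ w - 1) (Complex.normSq_nonneg e)]
    have habswe : ‖((w:ℝ):ℂ) - e‖ ≤ w + 1 := by
      have h' : ‖((w:ℝ):ℂ) - e‖ ≤ ‖((w:ℝ):ℂ)‖ + ‖e‖ := by
        exact norm_sub_le ((w:ℝ):ℂ) e
      rw [Complex.norm_real, Real.norm_eq_abs, abs_of_pos hpos] at h'
      linarith [habse]
    have hNS : Complex.normSq (((w:ℝ):ℂ) - e) ≤ (w+1)^2 := by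
      rw [← Complex.sq_norm]
      nlinarith [norm_nonneg (((w:ℝ):ℂ) - e), habswe]
    have himle : e.im^2 * w ≤ 1 := by
      have h1' : e.im^2 ≤ Complex.normSq e := by
        rw [Complex.normSq_apply]; nlinarith [sq_nonneg e.re]
      nlinarith [h1', hns, hpos]
    have hm1 : (1:ℝ) ≤ ((b:ℝ)^3 - ((t:ℝ)^3-1)*(c:ℝ)^3)^2 := by
      have hm1R := int_sq_ge_one hm
      push_cast at hm1R
      linarith [hm1R]
    -- assemble: 27 d² w ≤ 4 (w+1)⁴
    have hdpos : (0:ℝ) < (t:ℝ)^3 - 1 := by nlinarith [ht2 ht]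
    have hNSnn := Complex.normSq_nonneg (((w:ℝ):ℂ) - e)
    set dr : ℝ := (t:ℝ)^3 - 1 with hdr
    set mr : ℝ := (b:ℝ)^3 - dr*(c:ℝ)^3 with hmr
    have hDw : Complex.normSq (((w:ℝ):ℂ) - e)^2 * (4*(e.im^2*w)) = 27*(dr^2)*(mr^2)*w := by
      linear_combination w * hD2
    have p1 : Complex.normSq (((w:ℝ):ℂ) - e)^2 ≤ (w+1)^4 := by nlinarith [hNS, hNSnn]
    have s1 : Complex.normSq (((w:ℝ):ℂ) - e)^2 * (4*(e.im^2*w)) ≤ (w+1)^4 * (4*1) := by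
      refine mul_le_mul p1 (by linarith [himle]) ?_ (by positivity)
      have : (0:ℝ) ≤ e.im^2*w := mul_nonneg (sq_nonneg _) hpos.le
      linarith
    have s2 : 27*dr^2*w ≤ 27*(dr^2)*(mr^2)*w := by
      nlinarith [mul_nonneg (mul_nonneg (by positivity : (0:ℝ) ≤ 27*dr^2) hpos.le)
        (by linarith [hm1] : (0:ℝ) ≤ mr^2 - 1)]
    have hkey : 27*(dr^2) * w ≤ 4*(w+1)^4 := by linarith [s1, s2, hDw]
    rw [hdr] at hkey
    refine arith_contra (t:ℝ) w (ht2 ht) hgt (le_trans hsq (le_of_lt (E_lt ht hu hupos))) ?_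
    linarith [hkey]

/-! ### The minimum-unit argument -/

lemma no_unit_in_interval (ht : 1 < t) (hω2 : ω^2 + ω + 1 = 0) (hu : u^3 = ((t:ℝ))^3 - 1)
    (hupos : 0 < u) {z : ℝ} (hz : IsU t u z) (hz1 : 1 < z)
    (hz2 : z < (t:ℝ)^2 + (t:ℝ)*u + u^2) : False := by
  classical
  set E := (t:ℝ)^2 + (t:ℝ)*u + u^2 with hE
  have hElt := E_lt ht hu hupos
  have box_mem : ∀ w' : ℝ, IsU t u w' → 1 < w' → w' ≤ E →
      ∃ v ∈ (Finset.Icc ((-(t^2+1), -(t^2+1), -(t^2+1)) : ℤ×ℤ×ℤ) ((t^2+1, t^2+1, t^2+1))).filter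
        (fun v => nr (t^3-1) v = 1), em u v = w' := by
    intro w' hw' h1 h2
    obtain ⟨v, hnr, hem⟩ := hw'
    obtain ⟨ha, hb, hc⟩ := coeff_bound ht hω2 hu hupos hnr (by linarith [hem, h1])
      (by rw [hem]; linarith [h2, hElt])
    refine ⟨v, ?_, hem⟩
    rw [Finset.mem_filter, Finset.mem_Icc]
    rw [abs_le] at ha hb hc
    exact ⟨⟨⟨ha.1, hb.1, hc.1⟩, ⟨ha.2, hb.2, hc.2⟩⟩, hnr⟩
  set F : Finset ℝ := (((Finset.Icc ((-(t^2+1), -(t^2+1), -(t^2+1)) : ℤ×ℤ×ℤ)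
      ((t^2+1, t^2+1, t^2+1))).filter (fun v => nr (t^3-1) v = 1)).image (em u)).filter
      (fun z' => 1 < z' ∧ z' ≤ E) with hF
  have mem_F : ∀ w' : ℝ, IsU t u w' → 1 < w' → w' ≤ E → w' ∈ F := by
    intro w' hw' h1 h2
    obtain ⟨v, hv, hem⟩ := box_mem w' hw' h1 h2
    rw [hF, Finset.mem_filter]
    exact ⟨Finset.mem_image.mpr ⟨v, hv, hem⟩, h1, h2⟩
  have hEne : F.Nonempty := ⟨E, mem_F E IsU_E (E_gt ht hu hupos) le_rfl⟩
  set m := F.min' hEne with hmdef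
  have hchar : ∀ w' : ℝ, w' ∈ F →
      (∃ v, (nr (t^3-1) v = 1) ∧ em u v = w') ∧ 1 < w' ∧ w' ≤ E := by
    intro w' hw'
    rw [hF, Finset.mem_filter, Finset.mem_image] at hw'
    obtain ⟨⟨v, hv, hem⟩, h1, h2⟩ := hw'
    rw [Finset.mem_filter] at hv
    exact ⟨⟨v, hv.2, hem⟩, h1, h2⟩
  obtain ⟨⟨v0, hv0nr, hemv0⟩, hm1, hmE⟩ := hchar m (F.min'_mem hEne)
  have hmsq : E < m^2 := by
    by_contra hcon
    push_neg at hcon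
    exact no_small ht hω2 hu hupos hv0nr (by rw [hemv0]; exact hm1)
      (by rw [hemv0]; exact hcon)
  -- z and E/z are both units in (1, E]
  have hzpos : 0 < z := by linarith
  have hz' : IsU t u (E * z⁻¹) := IsU_mul hω2 hu IsU_E (IsU_inv hω2 hu hz)
  have hEgt : 1 < E := E_gt ht hu hupos
  have hEpos : 0 < E := lt_trans one_pos hEgt
  have hz'1 : 1 < E * z⁻¹ := by
    rw [← div_eq_mul_inv]
    exact (one_lt_div hzpos).mpr hz2
  have hz'2 : E * z⁻¹ < E := by
    rw [← div_eq_mul_inv, div_lt_iff₀ hzpos]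
    nlinarith [mul_lt_mul_of_pos_left hz1 hEpos]
  have hmz : m ≤ z := F.min'_le z (mem_F z hz hz1 (le_of_lt hz2))
  have hmz' : m ≤ E * z⁻¹ := F.min'_le _ (mem_F _ hz' hz'1 (le_of_lt hz'2))
  have : m^2 ≤ E := by
    have h1 : m * m ≤ z * (E * z⁻¹) :=
      mul_le_mul hmz hmz' (by linarith) (by linarith)
    have h2 : z * (E * z⁻¹) = E := by field_simp
    nlinarith [h1, h2]
  linarith [hmsq]

lemma IsU_zpow (ht : 1 < t) (hω2 : ω^2 + ω + 1 = 0) (hu : u^3 = ((t:ℝ))^3 - 1)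
    (hupos : 0 < u) (j : ℤ) : IsU t u (((t:ℝ)^2 + (t:ℝ)*u + u^2) ^ j) := by
  have hEpos : (0:ℝ) < (t:ℝ)^2 + (t:ℝ)*u + u^2 := lt_trans one_pos (E_gt ht hu hupos)
  have hinv : ((t:ℝ)^2 + (t:ℝ)*u + u^2)⁻¹ = (t:ℝ) - u :=
    inv_eq_of_mul_eq_one_left (epsE hu)
  obtain ⟨n, rfl | rfl⟩ := Int.eq_nat_or_neg j
  · rw [zpow_natCast]
    exact IsU_pow hω2 hu IsU_E n
  · rw [zpow_neg, zpow_natCast, ← inv_pow, hinv]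
    exact IsU_pow hω2 hu IsU_eps n

lemma unit_is_power (ht : 1 < t) (hω2 : ω^2 + ω + 1 = 0) (hu : u^3 = ((t:ℝ))^3 - 1)
    (hupos : 0 < u) {w : ℝ} (hIs : IsU t u w) (hwpos : 0 < w) :
    ∃ n : ℤ, w = ((t:ℝ) - u)^n := by
  set E := (t:ℝ)^2 + (t:ℝ)*u + u^2 with hE
  have hE1 : 1 < E := E_gt ht hu hupos
  have hEpos : (0:ℝ) < E := lt_trans one_pos hE1
  have hEne : E ≠ 0 := ne_of_gt hEpos
  obtain ⟨k, hk1, hk2⟩ := exists_mem_Ico_zpow hwpos hE1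
  have hz : IsU t u (w * E^(-k)) := IsU_mul hω2 hu hIs (IsU_zpow ht hω2 hu hupos (-k))
  have hEk : (0:ℝ) < E^(-k) := zpow_pos hEpos _
  have hz1 : 1 ≤ w * E^(-k) := by
    have h := mul_le_mul_of_nonneg_right hk1 (le_of_lt hEk)
    rw [← zpow_add₀ hEne] at h
    have he0 : k + -k = 0 := by omega
    rwa [he0, zpow_zero] at h
  have hz2 : w * E^(-k) < E := by
    have h := mul_lt_mul_of_pos_right hk2 hEk
    rw [← zpow_add₀ hEne] at h
    have he1 : k + 1 + -k = 1 := by omega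
    rwa [he1, zpow_one] at h
  rcases eq_or_lt_of_le hz1 with heq | hlt
  · refine ⟨-k, ?_⟩
    have hweq : w = E^k := by
      have h0 : w * E^(-k) = 1 := heq.symm
      have h2 : w * E^(-k) * E^k = E^k := by rw [h0, one_mul]
      rw [mul_assoc, ← zpow_add₀ hEne] at h2
      have he0 : -k + k = 0 := by omega
      rwa [he0, zpow_zero, mul_one] at h2
    have hinv : ((t:ℝ) - u) = E⁻¹ := (inv_eq_of_mul_eq_one_left (epsE hu)).symm
    rw [hweq, hinv, inv_zpow, ← zpow_neg, neg_neg]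
  · exact absurd hz2 (fun hc => no_unit_in_interval ht hω2 hu hupos hz hlt hc)

/-! ### Conjugate power equations -/

lemma omega_power_eq (ht : 1 < t) (hω2 : ω^2 + ω + 1 = 0) (hu : u^3 = ((t:ℝ))^3 - 1)
    (hupos : 0 < u) (x y : ℤ) (hnr : nr (t^3-1) ((x,-y,0) : ℤ×ℤ×ℤ) = 1)
    {n : ℤ} (hn : em u ((x,-y,0) : ℤ×ℤ×ℤ) = ((t:ℝ) - u)^n) :
    ((t:ℂ) - ω*(u:ℂ))^n = (x:ℂ) - (y:ℂ)*(ω*(u:ℂ)) := by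
  have hec_x : ec u ω ((x,-y,0) : ℤ×ℤ×ℤ) = (x:ℂ) - (y:ℂ)*(ω*(u:ℂ)) := by
    simp only [ec]; push_cast; ring
  obtain ⟨m, rfl | rfl⟩ := Int.eq_nat_or_neg n
  · -- nonnegative power
    have hem_eps : em u ((t,-1,0) : ℤ×ℤ×ℤ) = (t:ℝ) - u := by
      simp only [em]; push_cast; ring
    have hr : em u (pw (t^3-1) ((t,-1,0) : ℤ×ℤ×ℤ) m) = em u ((x,-y,0) : ℤ×ℤ×ℤ) := by
      rw [em_pw hu, hem_eps, hn, zpow_natCast]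
    have hpweq := em_inj ht hu hupos hr
    have hec := congrArg (ec u ω) hpweq
    rw [ec_pw hω2 hu, hec_x] at hec
    have hec_eps : ec u ω ((t,-1,0) : ℤ×ℤ×ℤ) = (t:ℂ) - ω*(u:ℂ) := by
      simp only [ec]; push_cast; ring
    rw [hec_eps] at hec
    rw [zpow_natCast]
    exact hec
  · -- negative power
    have hinv' : ((t:ℝ)-u)⁻¹ = (t:ℝ)^2 + (t:ℝ)*u + u^2 :=
      inv_eq_of_mul_eq_one_right (epsE hu)
    have h1 : ((t:ℝ)-u)^(-(m:ℤ)) = ((t:ℝ)^2 + (t:ℝ)*u + u^2)^m := by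
      rw [zpow_neg, zpow_natCast, ← inv_pow, hinv']
    have hem_E : em u ((t^2,t,1) : ℤ×ℤ×ℤ) = (t:ℝ)^2 + (t:ℝ)*u + u^2 := by
      simp only [em]; push_cast; ring
    have hr : em u (pw (t^3-1) ((t^2,t,1) : ℤ×ℤ×ℤ) m) = em u ((x,-y,0) : ℤ×ℤ×ℤ) := by
      rw [em_pw hu, hem_E, hn, h1]
    have hpweq := em_inj ht hu hupos hr
    have hec := congrArg (ec u ω) hpweq
    rw [ec_pw hω2 hu, hec_x] at hec
    have hecE : ec u ω ((t^2,t,1) : ℤ×ℤ×ℤ) = (t:ℂ)^2 + (t:ℂ)*(ω*(u:ℂ)) + ω^2*(u:ℂ)^2 := by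
      simp only [ec]; push_cast; ring
    have hccert : ((t:ℂ) - ω*(u:ℂ)) * ((t:ℂ)^2 + (t:ℂ)*(ω*(u:ℂ)) + ω^2*(u:ℂ)^2) = 1 := by
      linear_combination ((u:ℂ)^3 - ω*(u:ℂ)^3) * hω2 - (huc hu)
    have hinvC : ((t:ℂ)^2 + (t:ℂ)*(ω*(u:ℂ)) + ω^2*(u:ℂ)^2) = ((t:ℂ) - ω*(u:ℂ))⁻¹ :=
      eq_inv_of_mul_eq_one_left (by linear_combination hccert)
    rw [hecE, hinvC] at hec
    rw [zpow_neg, zpow_natCast, ← inv_pow]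
    exact hec

end Main

theorem stmt14_main (t : ℤ) (ht : 1 < t) (u : ℝ) (hu : u ^ 3 = (t : ℝ) ^ 3 - 1)
    (hupos : 0 < u) (ω : ℂ) (hω : IsPrimitiveRoot ω 3)
    (x y : ℤ) (hxy : x ^ 3 - (t ^ 3 - 1) * y ^ 3 = 1) :
    (∃ v : (Algebra.adjoin ℤ ({u} : Set ℝ))ˣ,
        ((v : Algebra.adjoin ℤ ({u} : Set ℝ)) : ℝ) = (x : ℝ) - u * y) ∧
      ((x : ℂ) - u * y) * ((x : ℂ) - ω * u * y) * ((x : ℂ) - ω ^ 2 * u * y) = 1 ∧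
      ∃ n : ℤ, (x : ℝ) - u * y = ((t : ℝ) - u) ^ n ∧
        ((t : ℂ) - u) ^ n + ω * ((t : ℂ) - ω * u) ^ n
          + ω ^ 2 * ((t : ℂ) - ω ^ 2 * u) ^ n = 0 := by
  have hω2 : ω^2 + ω + 1 = 0 := hom2 hω
  have hxyR : (x:ℝ)^3 - ((t:ℝ)^3-1)*(y:ℝ)^3 = 1 := by exact_mod_cast hxy
  have hxyC : (x:ℂ)^3 - ((t:ℂ)^3-1)*(y:ℂ)^3 = 1 := by exact_mod_cast hxy
  refine ⟨?_, ?_, ?_⟩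
  · -- the unit
    have humem : u ∈ Algebra.adjoin ℤ ({u} : Set ℝ) := Algebra.self_mem_adjoin_singleton ℤ u
    have hxmem : (x:ℝ) ∈ Algebra.adjoin ℤ ({u} : Set ℝ) := by
      simpa using (Algebra.adjoin ℤ ({u} : Set ℝ)).algebraMap_mem x
    have hymem : (y:ℝ) ∈ Algebra.adjoin ℤ ({u} : Set ℝ) := by
      simpa using (Algebra.adjoin ℤ ({u} : Set ℝ)).algebraMap_mem y
    have hval : (x:ℝ) - u * (y:ℝ) ∈ Algebra.adjoin ℤ ({u} : Set ℝ) :=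
      sub_mem hxmem (mul_mem humem hymem)
    have hinvm : (x:ℝ)^2 + (x:ℝ)*(y:ℝ)*u + (y:ℝ)^2*u^2 ∈ Algebra.adjoin ℤ ({u} : Set ℝ) :=
      add_mem (add_mem (pow_mem hxmem 2) (mul_mem (mul_mem hxmem hymem) humem))
        (mul_mem (pow_mem hymem 2) (pow_mem humem 2))
    have hprod : ((x:ℝ) - u * (y:ℝ)) * ((x:ℝ)^2 + (x:ℝ)*(y:ℝ)*u + (y:ℝ)^2*u^2) = 1 := by
      linear_combination hxyR - (y:ℝ)^3 * hu
    refine ⟨⟨⟨(x:ℝ) - u * (y:ℝ), hval⟩, ⟨(x:ℝ)^2 + (x:ℝ)*(y:ℝ)*u + (y:ℝ)^2*u^2, hinvm⟩,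
      ?_, ?_⟩, rfl⟩
    · exact Subtype.ext (by simpa using hprod)
    · exact Subtype.ext (by simpa [mul_comm] using hprod)
  · -- product of conjugates
    linear_combination (((y:ℂ)^3*(u:ℂ)^3 - (y:ℂ)^3*ω*(u:ℂ)^3 + (x:ℂ)*(y:ℂ)^2*ω*(u:ℂ)^2 - (x:ℂ)^2*(y:ℂ)*(u:ℂ)) * hω2)
      - ((y:ℂ)^3) * (huc hu) + hxyC
  · -- the power
    have hnr : nr (t^3-1) ((x,-y,0) : ℤ×ℤ×ℤ) = 1 := by
      simp only [nr]; linear_combination hxy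
    have hem : em u ((x,-y,0) : ℤ×ℤ×ℤ) = (x:ℝ) - u * (y:ℝ) := by
      simp only [em]; push_cast; ring
    have hIs : IsU t u ((x:ℝ) - u * (y:ℝ)) := ⟨_, hnr, hem⟩
    have hpos : 0 < em u ((x,-y,0) : ℤ×ℤ×ℤ) := (nr_pos_em hω2 hu hnr).1
    obtain ⟨n, hn⟩ := unit_is_power ht hω2 hu hupos hIs (by rwa [hem] at hpos)
    have hn' : em u ((x,-y,0) : ℤ×ℤ×ℤ) = ((t:ℝ) - u)^n := by rw [hem]; exact hn
    refine ⟨n, hn, ?_⟩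
    have hB : ((t:ℂ) - ω*(u:ℂ))^n = (x:ℂ) - (y:ℂ)*(ω*(u:ℂ)) :=
      omega_power_eq ht hω2 hu hupos x y hnr hn'
    have hC : ((t:ℂ) - ω^2*(u:ℂ))^n = (x:ℂ) - (y:ℂ)*(ω^2*(u:ℂ)) := by
      have h := congrArg (starRingEnd ℂ) hB
      simp only [map_zpow₀, map_sub, map_mul, map_pow, Complex.conj_ofReal, map_intCast,
        conj_omega hω2] at h
      convert h using 3 <;> ring
    have hA : ((t:ℂ) - (u:ℂ))^n = (x:ℂ) - (u:ℂ)*(y:ℂ) := by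
      have hcast := congrArg (fun r : ℝ => (r:ℂ)) hn
      push_cast [Complex.ofReal_zpow] at hcast
      exact hcast.symm
    rw [hA, hB, hC]
    linear_combination (((-1:ℂ)*(y:ℂ)*(u:ℂ) + (y:ℂ)*ω*(u:ℂ) + (-1:ℂ)*(y:ℂ)*ω^2*(u:ℂ) + (x:ℂ)) * hω2)

end St14x

/-- For an integer `t > 1` and `u` the real cube root of `t³−1`: any integer solution
of `x³ − (t³−1)y³ = 1` gives a unit `x − uy` of `ℤ[u]` of norm `1`, which is an
integral power `(t−u)ⁿ`, and taking conjugates (via a primitive cube root of unity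
`ω`) yields `(t−u)ⁿ + ω(t−ωu)ⁿ + ω²(t−ω²u)ⁿ = 0`. -/
theorem stmt14 (t : ℤ) (ht : 1 < t) (u : ℝ) (hu : u ^ 3 = (t : ℝ) ^ 3 - 1)
    (hupos : 0 < u) (ω : ℂ) (hω : IsPrimitiveRoot ω 3)
    (x y : ℤ) (hxy : x ^ 3 - (t ^ 3 - 1) * y ^ 3 = 1) :
    (∃ v : (Algebra.adjoin ℤ ({u} : Set ℝ))ˣ,
        ((v : Algebra.adjoin ℤ ({u} : Set ℝ)) : ℝ) = (x : ℝ) - u * y) ∧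
      ((x : ℂ) - u * y) * ((x : ℂ) - ω * u * y) * ((x : ℂ) - ω ^ 2 * u * y) = 1 ∧
      ∃ n : ℤ, (x : ℝ) - u * y = ((t : ℝ) - u) ^ n ∧
        ((t : ℂ) - u) ^ n + ω * ((t : ℂ) - ω * u) ^ n
          + ω ^ 2 * ((t : ℂ) - ω ^ 2 * u) ^ n = 0 := by
  exact St14x.stmt14_main t ht u hu hupos ω hω x y hxy
end
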